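/- Let α, β, c be real parameters. For every natural number n and every real x ≠ 0, the operator L^{(α,β,c)} acts on the basis function Φ_n by (L^{(α,β,c)} Φ_n)(x) = λ_n Φ_n(x) + η_n Φ_{n-1}(x) (with the convention Φ_{-1} = 0), where λ_n = 2n if n is even and λ_n = −2(α+β+n+1) if n is odd, and η_n = 2(c−1)n if n is even and η_n = 2(c+1)(β+n) if n is odd. -/

import Mathlib

noncomputable section

/-- The big -1 Jacobi operator `L^{(α,β,c)}`: acts on `f` at `x ≠ 0` by
`g₀(x)(f(-x) - f(x)) - g₁(x) f'(-x)`, where the last term is `g₁(x)` times the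
value at `x` of the derivative of the reflected function `t ↦ f (-t)`,
which equals `-f'(-x)`. -/
noncomputable def Lop (α β c : ℝ) (f : ℝ → ℝ) (x : ℝ) : ℝ :=
  ((α + β + 1) * x ^ 2 + (c * α - β) * x + c) / x ^ 2 * (f (-x) - f x)
    - (2 * (x - 1) * (x + c) / x) * deriv f (-x)

/-- The canonical polynomial basis `Φ_n`. -/
noncomputable def Phi (c : ℝ) (n : ℕ) (x : ℝ) : ℝ :=
  if Even n then (x ^ 2 - c ^ 2) ^ (n / 2)
  else (x + c) * (x ^ 2 - c ^ 2) ^ ((n - 1) / 2)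

lemma hasDerivAt_base (c x : ℝ) : HasDerivAt (fun x : ℝ => x ^ 2 - c ^ 2) (2 * x) x := by
  simpa using (hasDerivAt_pow 2 x).sub_const (c ^ 2)

lemma hasDerivAt_evenPhi (c : ℝ) (k : ℕ) (x : ℝ) :
    HasDerivAt (fun x : ℝ => (x ^ 2 - c ^ 2) ^ (k + 1))
      (((k : ℝ) + 1) * (x ^ 2 - c ^ 2) ^ k * (2 * x)) x := by
  simpa using (hasDerivAt_base c x).fun_pow (k + 1)

lemma hasDerivAt_oddPhi (c : ℝ) (k : ℕ) (x : ℝ) :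
    HasDerivAt (fun x : ℝ => (x + c) * (x ^ 2 - c ^ 2) ^ (k + 1))
      (1 * (x ^ 2 - c ^ 2) ^ (k + 1)
        + (x + c) * (((k : ℝ) + 1) * (x ^ 2 - c ^ 2) ^ k * (2 * x))) x := by
  exact ((hasDerivAt_id x).add_const c).mul (hasDerivAt_evenPhi c k x)

/-- The operator `L^{(α,β,c)}` is 2-diagonal lower-triangular on the basis `Φ_n`:
`L Φ_n = λ_n Φ_n + η_n Φ_{n-1}` (with the convention `Φ_{-1} = 0`, automatic here
since `η_0 = 0`), where `λ_n = 2n` for even `n`, `λ_n = -2(α+β+n+1)` for odd `n`,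
and `η_n = 2(c-1)n` for even `n`, `η_n = 2(c+1)(β+n)` for odd `n`. -/
theorem L_on_Phi (α β c : ℝ) (n : ℕ) (x : ℝ) (hx : x ≠ 0) :
    Lop α β c (Phi c n) x =
      (if Even n then 2 * (n : ℝ) else -2 * (α + β + n + 1)) * Phi c n x
        + (if Even n then 2 * (c - 1) * (n : ℝ) else 2 * (c + 1) * (β + n)) *
            Phi c (n - 1) x := by
  rcases Nat.even_or_odd n with he | ho
  · -- even case
    obtain ⟨m, rfl⟩ := he
    have hEv : Even (m + m) := ⟨m, rfl⟩
    cases m with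
    | zero =>
      have hPhi : Phi c 0 = fun _ : ℝ => (1 : ℝ) := by
        funext y; simp [Phi]
      simp [Lop, hPhi]
    | succ k =>
      have hP : Phi c (k + 1 + (k + 1)) = fun y : ℝ => (y ^ 2 - c ^ 2) ^ (k + 1) := by
        funext y
        have e1 : (k + 1 + (k + 1)) / 2 = k + 1 := by omega
        simp [Phi, (⟨k + 1, rfl⟩ : Even (k + 1 + (k + 1))), e1]
      have hodd : ¬ Even (k + 1 + (k + 1) - 1) := by
        rw [Nat.even_iff]; omega
      have hP1 : Phi c (k + 1 + (k + 1) - 1) = fun y : ℝ => (y + c) * (y ^ 2 - c ^ 2) ^ k := by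
        funext y
        have e0 : k + 1 + (k + 1) - 1 = 2 * k + 1 := by omega
        rw [e0]
        simp [Phi, (by rw [Nat.even_iff]; omega : ¬ Even (2 * k + 1)),
          (by omega : (2 * k + 1 - 1) / 2 = k)]
      have hd : deriv (Phi c (k + 1 + (k + 1))) (-x)
          = ((k : ℝ) + 1) * ((-x) ^ 2 - c ^ 2) ^ k * (2 * (-x)) := by
        rw [hP]; exact (hasDerivAt_evenPhi c k (-x)).deriv
      rw [Lop, hd, hP, hP1]
      simp only [if_pos hEv]
      simp only [neg_sq]
      push_cast
      rw [pow_succ]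
      field_simp
      ring
  · -- odd case
    obtain ⟨m, rfl⟩ := ho
    have hnotEv : ¬ Even (2 * m + 1) := by rw [Nat.even_iff]; omega
    have hP1 : Phi c (2 * m + 1 - 1) = fun y : ℝ => (y ^ 2 - c ^ 2) ^ m := by
      funext y
      have e1 : (2 * m + 1 - 1) / 2 = m := by omega
      have hev : Even (2 * m + 1 - 1) := by rw [Nat.even_iff]; omega
      simp [Phi, hev, e1]
    cases m with
    | zero =>
      have hP : Phi c (2 * 0 + 1) = fun y : ℝ => y + c := by
        funext y; simp [Phi]
      have hd : deriv (Phi c (2 * 0 + 1)) (-x) = 1 := by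
        rw [hP]
        simpa using ((hasDerivAt_id (-x)).add_const c).deriv
      rw [Lop, hd, hP, hP1]
      simp only [if_neg hnotEv]
      push_cast
      field_simp
      ring
    | succ k =>
      have hP : Phi c (2 * (k + 1) + 1)
          = fun y : ℝ => (y + c) * (y ^ 2 - c ^ 2) ^ (k + 1) := by
        funext y
        have e1 : (2 * (k + 1) + 1 - 1) / 2 = k + 1 := by omega
        simp [Phi, hnotEv, e1]
      have hd : deriv (Phi c (2 * (k + 1) + 1)) (-x)
          = 1 * ((-x) ^ 2 - c ^ 2) ^ (k + 1)
            + (-x + c) * (((k : ℝ) + 1) * ((-x) ^ 2 - c ^ 2) ^ k * (2 * (-x))) := by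
        rw [hP]; exact (hasDerivAt_oddPhi c k (-x)).deriv
      rw [Lop, hd, hP, hP1]
      simp only [if_neg hnotEv, neg_sq]
      push_cast
      rw [pow_succ]
      field_simp
      ring
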